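/- Let P ⊆ ℝ^d be a d-simplex or d-parallelotope, let x be in the relative interior of P, and let H⁺ ⊆ ℝ^d be a closed half-space with x on its boundary. Then there exists a vertex v of P such that the parallelotope P^v(x) (spanned at v by the scaled edge vectors determined by x) is contained in P ∩ H⁺. In particular, when P = [0,1]^d and x ∈ (0,1)^d, one has μ_d(P ∩ H⁺) ≥ ∏_{j=1}^d |x_j − v_j| for some vertex v ∈ {0,1}^d. -/

import Mathlib

open MeasureTheory

namespace Stmt17
open Set

/-- the linear functional y ↦ ∑ u j * y j -/
noncomputable def F (d : ℕ) (u : Fin d → ℝ) : (Fin d → ℝ) →ₗ[ℝ] ℝ where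
  toFun y := ∑ j, u j * y j
  map_add' a b := by simp [mul_add, Finset.sum_add_distrib]
  map_smul' c a := by
    simp only [Pi.smul_apply, smul_eq_mul, RingHom.id_apply, Finset.mul_sum]
    exact Finset.sum_congr rfl fun i _ => by ring

@[simp] lemma F_apply (d : ℕ) (u y : Fin d → ℝ) : F d u y = ∑ j, u j * y j := rfl

lemma extremePoints_affine_image {E : Type*} [AddCommGroup E] [Module ℝ E]
    (L : E ≃ₗ[ℝ] E) (v₀ : E) (s : Set E) (p : E) (hp : p ∈ s.extremePoints ℝ) :
    v₀ + L p ∈ ((fun y => v₀ + L y) '' s).extremePoints ℝ := by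
  rw [mem_extremePoints] at hp ⊢
  refine ⟨⟨p, hp.1, rfl⟩, ?_⟩
  rintro y ⟨a, ha, rfl⟩ z ⟨b, hb, rfl⟩ ⟨s', t', hs', ht', hst, H⟩
  have key : p = s' • a + t' • b := by
    apply L.injective
    simp only [smul_add, LinearEquiv.map_add, LinearEquiv.map_smul]
    simp only at H
    have h2 : s' • v₀ + t' • v₀ = v₀ := by rw [← add_smul, hst, one_smul]
    have := H
    rw [smul_add, smul_add] at this
    have h3 : L p = s' • L a + t' • L b := by
      have h4 : s' • L a + t' • L b
          = (s' • v₀ + s' • L a + (t' • v₀ + t' • L b)) - (s' • v₀ + t' • v₀) := by abel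
      rw [h2, this] at h4
      rw [h4]; abel
    exact h3
  obtain ⟨h1, h2⟩ := hp.2 a ha b hb ⟨s', t', hs', ht', hst, key.symm⟩
  exact ⟨by rw [h1], by rw [h2]⟩


lemma mem_extremePoints_Icc01 {c : ℝ} (h : c = 0 ∨ c = 1) :
    c ∈ (Icc (0:ℝ) 1).extremePoints ℝ := by
  rw [mem_extremePoints]
  constructor
  · rcases h with h | h <;> simp [h]
  · rintro a ha b hb ⟨s, t, hs, ht, hst, H⟩
    simp only [smul_eq_mul] at H
    rcases h with h | h <;> subst h
    · constructor <;> nlinarith [ha.1, hb.1, ha.2, hb.2]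
    · constructor <;> nlinarith [ha.1, hb.1, ha.2, hb.2]

lemma cube_vertex_extreme {d : ℕ} (lam : Fin d → ℝ) (h : ∀ j, lam j = 0 ∨ lam j = 1) :
    lam ∈ {a : Fin d → ℝ | ∀ j, a j ∈ Icc (0:ℝ) 1}.extremePoints ℝ := by
  have hset : {a : Fin d → ℝ | ∀ j, a j ∈ Icc (0:ℝ) 1}
      = univ.pi (fun _ => Icc (0:ℝ) 1) := by ext a; simp [Set.mem_pi, Set.mem_Icc, Pi.le_def, forall_and]
  rw [hset, extremePoints_pi]
  intro j _
  exact mem_extremePoints_Icc01 (h j)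

lemma simplex_zero_extreme {d : ℕ} :
    (0 : Fin d → ℝ) ∈ {a : Fin d → ℝ | (∀ j, 0 ≤ a j) ∧ ∑ j, a j ≤ 1}.extremePoints ℝ := by
  rw [mem_extremePoints]
  refine ⟨⟨fun j => le_refl 0, by simp⟩, ?_⟩
  rintro a ha b hb ⟨s, t, hs, ht, hst, H⟩
  constructor
  · funext j
    have hj := congrFun H j
    simp only [Pi.add_apply, Pi.smul_apply, smul_eq_mul, Pi.zero_apply] at hj
    show a j = 0
    nlinarith [ha.1 j, hb.1 j]
  · funext j
    have hj := congrFun H j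
    simp only [Pi.add_apply, Pi.smul_apply, smul_eq_mul, Pi.zero_apply] at hj
    show b j = 0
    nlinarith [ha.1 j, hb.1 j]

lemma simplex_single_extreme {d : ℕ} (k : Fin d) :
    (Pi.single k 1 : Fin d → ℝ)
      ∈ {a : Fin d → ℝ | (∀ j, 0 ≤ a j) ∧ ∑ j, a j ≤ 1}.extremePoints ℝ := by
  rw [mem_extremePoints]
  refine ⟨⟨fun j => by by_cases hj : j = k <;> simp [Pi.single_apply, hj], by
    simp [Finset.sum_pi_single]⟩, ?_⟩
  rintro a ha b hb ⟨s, t, hs, ht, hst, H⟩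
  have key : ∀ c : Fin d → ℝ, (∀ j, 0 ≤ c j) → ∑ j, c j ≤ 1 → c k = 1 →
      c = Pi.single k 1 := by
    intro c hc hcs hck
    funext j
    by_cases hj : j = k
    · simp [hj, Pi.single_apply, hck]
    · simp only [Pi.single_apply, hj, if_neg hj]
      have h1 : ∑ i ∈ Finset.univ.erase k, c i = (∑ i, c i) - c k := by
        rw [← Finset.sum_erase_add Finset.univ c (Finset.mem_univ k)]; ring
      have h2 : ∑ i ∈ Finset.univ.erase k, c i ≤ 0 := by rw [h1, hck]; linarith
      have h3 : ∑ i ∈ Finset.univ.erase k, c i = 0 :=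
        le_antisymm h2 (Finset.sum_nonneg fun i _ => hc i)
      have := (Finset.sum_eq_zero_iff_of_nonneg (fun i _ => hc i)).1 h3 j
        (by simp [Finset.mem_erase, hj])
      exact this
  have hak : a k ≤ 1 := le_trans (Finset.single_le_sum (fun i _ => ha.1 i)
    (Finset.mem_univ k)) ha.2
  have hbk : b k ≤ 1 := le_trans (Finset.single_le_sum (fun i _ => hb.1 i)
    (Finset.mem_univ k)) hb.2
  have hk := congrFun H k
  simp only [Pi.add_apply, Pi.smul_apply, smul_eq_mul, Pi.single_eq_same] at hk
  have hak1 : a k = 1 := by nlinarith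
  have hbk1 : b k = 1 := by nlinarith
  exact ⟨key a ha.1 ha.2 hak1, key b hb.1 hb.2 hbk1⟩

lemma perturb {d : ℕ} {S : Set (Fin d → ℝ)} {x : Fin d → ℝ} (hx : x ∈ interior S)
    (z : Fin d → ℝ) : ∃ δ : ℝ, 0 < δ ∧ x + δ • z ∈ S := by
  have hcont : Continuous fun δ : ℝ => x + δ • z := by continuity
  have htend : Filter.Tendsto (fun δ : ℝ => x + δ • z) (nhds 0) (nhds x) := by
    have := hcont.tendsto 0
    simpa using this
  have hev : ∀ᶠ δ in nhds (0:ℝ), x + δ • z ∈ interior S :=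
    htend.eventually (isOpen_interior.mem_nhds hx)
  obtain ⟨δ, h1, h2⟩ :=
    ((hev.filter_mono (nhdsWithin_le_nhds (s := Set.Ioi (0:ℝ)))).and
      self_mem_nhdsWithin).exists
  exact ⟨δ, h2, interior_subset h1⟩

lemma halfspace_key {d : ℕ} (u v : Fin d → ℝ) (w' : Fin d → Fin d → ℝ) (t μ : Fin d → ℝ)
    (hFw : ∀ j, 0 ≤ F d u (w' j)) (ht : ∀ j, 0 ≤ t j) (hμ : ∀ j, μ j ≤ 1) :
    ∑ j, u j * (v + ∑ i, (μ i * t i) • w' i) j ≤ ∑ j, u j * (v + ∑ i, t i • w' i) j := by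
  have h1 : ∀ y : Fin d → ℝ, ∑ j, u j * y j = F d u y := fun y => rfl
  rw [h1, h1, map_add, map_add, map_sum, map_sum]
  refine add_le_add le_rfl (Finset.sum_le_sum fun j _ => ?_)
  rw [LinearMap.map_smul, LinearMap.map_smul]
  simp only [smul_eq_mul]
  have h0 : 0 ≤ (1 - μ j) * t j * F d u (w' j) :=
    mul_nonneg (mul_nonneg (by linarith [hμ j]) (ht j)) (hFw j)
  nlinarith [h0]

end Stmt17

open Stmt17 in
set_option maxHeartbeats 2000000 in
theorem stmt_17 (d : ℕ) (hd : 0 < d) (P : Set (Fin d → ℝ))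
    (v₀ : Fin d → ℝ) (w : Fin d → (Fin d → ℝ)) (hw : LinearIndependent ℝ w)
    (hP : P = {y | ∃ lam : Fin d → ℝ, (∀ j, 0 ≤ lam j) ∧ (∑ j, lam j) ≤ 1 ∧
            y = v₀ + ∑ j, lam j • w j}
        ∨ P = {y | ∃ lam : Fin d → ℝ, (∀ j, lam j ∈ Set.Icc (0 : ℝ) 1) ∧
            y = v₀ + ∑ j, lam j • w j})
    (x : Fin d → ℝ) (hx : x ∈ interior P)
    (u : Fin d → ℝ) (hu : u ≠ 0) :
    (∃ (v : Fin d → ℝ) (w' : Fin d → (Fin d → ℝ)) (t : Fin d → ℝ),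
      v ∈ P.extremePoints ℝ ∧ (∀ j, v + w' j ∈ P.extremePoints ℝ) ∧
      LinearIndependent ℝ w' ∧ (∀ j, t j ∈ Set.Ioo (0 : ℝ) 1) ∧
      x = v + ∑ j, t j • w' j ∧
      {y | ∃ mu : Fin d → ℝ, (∀ j, mu j ∈ Set.Icc (0 : ℝ) 1) ∧
          y = v + ∑ j, (mu j * t j) • w' j}
        ⊆ P ∩ {y | ∑ j, u j * y j ≤ ∑ j, u j * x j})
    ∧ (P = {y : Fin d → ℝ | ∀ j, y j ∈ Set.Icc (0 : ℝ) 1} →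
        ∃ v : Fin d → ℝ, (∀ j, v j = 0 ∨ v j = 1) ∧
          ∏ j, |x j - v j|
            ≤ (volume (P ∩ {y : Fin d → ℝ | ∑ j, u j * y j ≤ ∑ j, u j * x j})).toReal) := by
  haveI : Nonempty (Fin d) := ⟨⟨0, hd⟩⟩
  constructor
  · classical
    have hcard : Fintype.card (Fin d) = Module.finrank ℝ (Fin d → ℝ) := by
      rw [Module.finrank_fintype_fun_eq_card]
    let b : Module.Basis (Fin d) ℝ (Fin d → ℝ) := basisOfLinearIndependentOfCardEqFinrank hw hcard
    have hb : ⇑b = w := coe_basisOfLinearIndependentOfCardEqFinrank hw hcard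
    set L : (Fin d → ℝ) ≃ₗ[ℝ] (Fin d → ℝ) := b.equivFun.symm with hLdef
    have hL : ∀ lam : Fin d → ℝ, L lam = ∑ j, lam j • w j := by
      intro lam
      rw [hLdef, Module.Basis.equivFun_symm_apply]
      exact Finset.sum_congr rfl fun i _ => by rw [hb]
    have hLsingle : ∀ j, L (Pi.single j 1) = w j := by
      intro j
      rw [hL, Finset.sum_eq_single j]
      · simp
      · intro i _ hij
        rw [Pi.single_eq_of_ne hij, zero_smul]
      · intro h; exact absurd (Finset.mem_univ j) h
    let T : (Fin d → ℝ) ≃ₜ (Fin d → ℝ) :=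
      L.toContinuousLinearEquiv.toHomeomorph.trans (Homeomorph.addLeft v₀)
    have hT : ⇑T = fun lam => v₀ + L lam := by
      funext lam
      show v₀ + L.toContinuousLinearEquiv lam = v₀ + L lam
      rw [LinearEquiv.coe_toContinuousLinearEquiv']
    rcases hP with hP | hP
    · -- simplex case
      set S : Set (Fin d → ℝ) := {a : Fin d → ℝ | (∀ j, 0 ≤ a j) ∧ ∑ j, a j ≤ 1} with hSdef
      have hPS : P = (fun lam => v₀ + L lam) '' S := by
        rw [hP]; ext y
        simp only [Set.mem_image, Set.mem_setOf_eq]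
        constructor
        · rintro ⟨lam, h1, h2, h3⟩
          exact ⟨lam, ⟨h1, h2⟩, by rw [hL]; exact h3.symm⟩
        · rintro ⟨lam, ⟨h1, h2⟩, rfl⟩
          exact ⟨lam, h1, h2, by rw [hL]⟩
      have hxS : x ∈ (fun lam => v₀ + L lam) '' interior S := by
        have h1 : interior P = (fun lam => v₀ + L lam) '' interior S := by
          rw [hPS, ← hT, T.image_interior]
        rwa [h1] at hx
      obtain ⟨xt, hxt, hxeq⟩ := hxS
      have hpos : ∀ j, 0 < xt j := by
        intro j
        obtain ⟨δ, hδ, hmem⟩ := perturb hxt (-Pi.single j 1)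
        have h2 := hmem.1 j
        simp only [Pi.add_apply, Pi.smul_apply, Pi.neg_apply, Pi.single_eq_same,
          smul_eq_mul, mul_one, mul_neg] at h2
        linarith
      have hsumlt : ∑ j, xt j < 1 := by
        obtain ⟨δ, hδ, hmem⟩ := perturb hxt (fun _ => 1)
        have h2 := hmem.2
        simp only [Pi.add_apply, Pi.smul_apply, smul_eq_mul, mul_one,
          Finset.sum_add_distrib, Finset.sum_const, Finset.card_univ, Fintype.card_fin,
          nsmul_eq_mul] at h2
        have h4 : 0 < (d:ℝ) * δ := mul_pos (by exact_mod_cast hd) hδ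
        linarith
      set c : Fin d → ℝ := fun j => F d u (w j) with hc
      obtain ⟨k, -, hk⟩ := Finset.exists_min_image Finset.univ c Finset.univ_nonempty
      have hck' : ∀ j, F d u (w k) ≤ F d u (w j) := by
        intro j
        have h := hk j (Finset.mem_univ j)
        simp only [hc] at h
        exact h
      by_cases hck : 0 ≤ c k
      · -- vertex v₀ works
        simp only [hc] at hck
        have hxform : x = v₀ + ∑ j, xt j • w j := by rw [← hL]; exact hxeq.symm
        refine ⟨v₀, w, xt, ?_, ?_, hw, ?_, hxform, ?_⟩
        · have h0 := extremePoints_affine_image L v₀ S 0 (by rw [hSdef]; exact simplex_zero_extreme)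
          rw [hPS]
          simpa using h0
        · intro j
          have h0 := extremePoints_affine_image L v₀ S (Pi.single j 1)
            (by rw [hSdef]; exact simplex_single_extreme j)
          rw [hPS, ← hLsingle j]
          exact h0
        · intro j
          refine ⟨hpos j, lt_of_le_of_lt ?_ hsumlt⟩
          exact Finset.single_le_sum (fun i _ => le_of_lt (hpos i)) (Finset.mem_univ j)
        · rintro y ⟨mu, hmu, rfl⟩
          constructor
          · rw [hP]
            refine ⟨fun j => mu j * xt j, fun j => mul_nonneg (hmu j).1 (le_of_lt (hpos j)),
              ?_, rfl⟩
            refine le_of_lt (lt_of_le_of_lt (Finset.sum_le_sum fun j _ => ?_) hsumlt)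
            nlinarith [(hmu j).1, (hmu j).2, hpos j]
          · simp only [Set.mem_setOf_eq]
            conv_rhs => rw [hxform]
            exact halfspace_key u v₀ w xt mu
              (fun j => le_trans hck (hck' j))
              (fun j => le_of_lt (hpos j)) (fun j => (hmu j).2)
      · -- vertex v₀ + w k works
        push_neg at hck
        simp only [hc] at hck
        set t : Fin d → ℝ := Function.update xt k (1 - ∑ j, xt j) with htdef
        set w' : Fin d → Fin d → ℝ := fun j => if j = k then -w k else w j - w k with hw'def
        have hψ : ∀ j, w' j
            = L ((if j = k then (0 : Fin d → ℝ) else Pi.single j 1) - Pi.single k 1) := by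
          intro j
          rw [map_sub, hLsingle]
          by_cases hj : j = k
          · rw [hj]
            simp only [hw'def, eq_self_iff_true, if_true, map_zero, zero_sub]
          · simp only [hw'def, if_neg hj, hLsingle]
        have hcomb : ∀ g : Fin d → ℝ, ∑ j, g j • w' j
            = L (fun i => if i = k then -(∑ j, g j) else g i) := by
          intro g
          have h1 : ∑ j, g j • w' j = L (∑ j, g j •
              ((if j = k then (0 : Fin d → ℝ) else Pi.single j 1) - Pi.single k 1)) := by
            rw [map_sum]
            exact Finset.sum_congr rfl fun j _ => by rw [LinearEquiv.map_smul, ← hψ j]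
          rw [h1]
          congr 1
          funext i
          simp only [Finset.sum_apply, Pi.smul_apply, Pi.sub_apply, smul_eq_mul, mul_sub]
          rw [Finset.sum_sub_distrib]
          rw [← Finset.sum_mul]
          by_cases hik : i = k
          · rw [hik, Pi.single_eq_same, mul_one]
            have hA : ∑ j, g j * (if j = k then (0 : Fin d → ℝ) else Pi.single j 1) k = 0 := by
              apply Finset.sum_eq_zero
              intro j _
              by_cases hj : j = k
              · simp [hj]
              · rw [if_neg hj, Pi.single_eq_of_ne (fun h => hj h.symm), mul_zero]
            rw [hA, if_pos rfl]
            ring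
          · rw [Pi.single_eq_of_ne hik, mul_zero, if_neg hik, sub_zero]
            rw [Finset.sum_eq_single i]
            · rw [if_neg hik, Pi.single_eq_same, mul_one]
            · intro j _ hji
              by_cases hj : j = k
              · simp [hj]
              · rw [if_neg hj, Pi.single_eq_of_ne (Ne.symm hji), mul_zero]
            · intro h; exact absurd (Finset.mem_univ i) h
        have hsumxt_pos : 0 < ∑ j, xt j :=
          lt_of_lt_of_le (hpos k)
            (Finset.single_le_sum (fun i _ => le_of_lt (hpos i)) (Finset.mem_univ k))
        have hsum_t : ∑ j, t j = 1 - xt k := by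
          rw [htdef, Finset.sum_update_of_mem (Finset.mem_univ k)]
          rw [← Finset.erase_eq, Finset.sum_erase_eq_sub (Finset.mem_univ k)]
          ring
        have ht_mem : ∀ j, t j ∈ Set.Ioo (0:ℝ) 1 := by
          intro j
          by_cases hj : j = k
          · rw [htdef, hj, Function.update_self]
            exact ⟨by linarith, by linarith⟩
          · rw [htdef, Function.update_of_ne hj]
            refine ⟨hpos j, lt_of_le_of_lt ?_ hsumlt⟩
            exact Finset.single_le_sum (fun i _ => le_of_lt (hpos i)) (Finset.mem_univ j)
        have hxform : x = (v₀ + L (Pi.single k 1)) + ∑ j, t j • w' j := by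
          rw [hcomb t, add_assoc, ← map_add, ← hxeq]
          have harg : (Pi.single k 1 + fun i => if i = k then -(∑ j, t j) else t i) = xt := by
            funext i
            simp only [Pi.add_apply]
            by_cases hik : i = k
            · rw [hik, Pi.single_eq_same, if_pos rfl, hsum_t]
              ring
            · rw [Pi.single_eq_of_ne hik, if_neg hik, htdef, Function.update_of_ne hik]
              ring
          rw [harg]
        have hFw' : ∀ j, 0 ≤ F d u (w' j) := by
          intro j
          by_cases hj : j = k
          · rw [hj]
            simp only [hw'def, eq_self_iff_true, if_true, map_neg]
            linarith
          · simp only [hw'def, if_neg hj, map_sub]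
            linarith [hck' j]
        refine ⟨v₀ + L (Pi.single k 1), w', t, ?_, ?_, ?_, ht_mem, hxform, ?_⟩
        · rw [hPS]
          exact extremePoints_affine_image L v₀ S (Pi.single k 1)
            (by rw [hSdef]; exact simplex_single_extreme k)
        · intro j
          by_cases hj : j = k
          · have heq : (v₀ + L (Pi.single k 1)) + w' j = v₀ + L 0 := by
              rw [hj]
              simp only [hw'def, eq_self_iff_true, if_true, hLsingle, map_zero]
              abel
            rw [hPS, heq]
            exact extremePoints_affine_image L v₀ S 0 (by rw [hSdef]; exact simplex_zero_extreme)
          · have heq : (v₀ + L (Pi.single k 1)) + w' j = v₀ + L (Pi.single j 1) := by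
              simp only [hw'def, if_neg hj, hLsingle]
              abel
            rw [hPS, heq]
            exact extremePoints_affine_image L v₀ S (Pi.single j 1)
              (by rw [hSdef]; exact simplex_single_extreme j)
        · rw [Fintype.linearIndependent_iff]
          intro g hg
          have hη : (fun i => if i = k then -(∑ j, g j) else g i) = (0 : Fin d → ℝ) :=
            L.injective (by rw [← hcomb g, hg, map_zero])
          intro i
          by_cases hik : i = k
          · have hsg : -(∑ j, g j) = 0 := by simpa [hik] using congrFun hη i
            have hz : ∀ j, j ≠ i → g j = 0 := fun j hj => by
              have hj' : ¬(j = k) := fun h => hj (h.trans hik.symm)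
              simpa [hj'] using congrFun hη j
            have hsum : ∑ j, g j = g i :=
              Finset.sum_eq_single i (fun j _ hj => hz j hj)
                (fun h => absurd (Finset.mem_univ i) h)
            rw [hsum] at hsg
            linarith
          · simpa [hik] using congrFun hη i
        · rintro y ⟨mu, hmu, rfl⟩
          have hmt_le : ∀ j, mu j * t j ≤ t j := fun j => by
            nlinarith [(hmu j).1, (hmu j).2, (ht_mem j).1, (ht_mem j).2]
          have hmt_nonneg : ∀ j, 0 ≤ mu j * t j := fun j =>
            mul_nonneg (hmu j).1 (le_of_lt (ht_mem j).1)
          have hsum_mt : ∑ j, mu j * t j ≤ 1 - xt k := by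
            rw [← hsum_t]
            exact Finset.sum_le_sum fun j _ => hmt_le j
          constructor
          · rw [hP]
            refine ⟨Function.update (fun i => mu i * t i) k (1 - ∑ j, mu j * t j), ?_, ?_, ?_⟩
            · intro i
              by_cases hik : i = k
              · rw [hik, Function.update_self]
                linarith [hpos k]
              · rw [Function.update_of_ne hik]
                exact hmt_nonneg i
            · rw [Finset.sum_update_of_mem (Finset.mem_univ k)]
              rw [← Finset.erase_eq, Finset.sum_erase_eq_sub (Finset.mem_univ k)]
              linarith [hmt_nonneg k]
            · have hc2 : ∑ j, (mu j * t j) • w' j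
                  = L (fun i => if i = k then -(∑ j, mu j * t j) else mu i * t i) :=
                hcomb (fun j => mu j * t j)
              have hLup : ∑ j, Function.update (fun i => mu i * t i) k
                    (1 - ∑ j, mu j * t j) j • w j
                  = L (Function.update (fun i => mu i * t i) k (1 - ∑ j, mu j * t j)) :=
                (hL _).symm
              rw [hc2, add_assoc, ← map_add, hLup]
              have harg : (Pi.single k 1 + fun i => if i = k then -(∑ j, mu j * t j) else mu i * t i)
                  = Function.update (fun i => mu i * t i) k (1 - ∑ j, mu j * t j) := by
                funext i
                simp only [Pi.add_apply]
                by_cases hik : i = k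
                · rw [hik, Pi.single_eq_same, if_pos rfl, Function.update_self]
                  ring
                · rw [Pi.single_eq_of_ne hik, if_neg hik, Function.update_of_ne hik]
                  ring
              rw [harg]
          · simp only [Set.mem_setOf_eq]
            conv_rhs => rw [hxform]
            exact halfspace_key u (v₀ + L (Pi.single k 1)) w' t mu hFw'
              (fun j => le_of_lt (ht_mem j).1) (fun j => (hmu j).2)
    · -- parallelotope case
      set S : Set (Fin d → ℝ) := {a : Fin d → ℝ | ∀ j, a j ∈ Set.Icc (0:ℝ) 1} with hSdef
      have hPS : P = (fun lam => v₀ + L lam) '' S := by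
        rw [hP]; ext y
        simp only [Set.mem_image, Set.mem_setOf_eq]
        constructor
        · rintro ⟨lam, h1, h2⟩
          exact ⟨lam, h1, by rw [hL]; exact h2.symm⟩
        · rintro ⟨lam, h1, rfl⟩
          exact ⟨lam, h1, by rw [hL]⟩
      have hxS : x ∈ (fun lam => v₀ + L lam) '' interior S := by
        have h1 : interior P = (fun lam => v₀ + L lam) '' interior S := by
          rw [hPS, ← hT, T.image_interior]
        rwa [h1] at hx
      obtain ⟨xt, hxt, hxeq⟩ := hxS
      have hpos : ∀ j, 0 < xt j := by
        intro j
        obtain ⟨δ, hδ, hmem⟩ := perturb hxt (-Pi.single j 1)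
        have h2 := (hmem j).1
        simp only [Pi.add_apply, Pi.smul_apply, Pi.neg_apply, Pi.single_eq_same,
          smul_eq_mul, mul_one, mul_neg] at h2
        linarith
      have hlt : ∀ j, xt j < 1 := by
        intro j
        obtain ⟨δ, hδ, hmem⟩ := perturb hxt (Pi.single j 1)
        have h2 := (hmem j).2
        simp only [Pi.add_apply, Pi.smul_apply, Pi.single_eq_same, smul_eq_mul, mul_one] at h2
        linarith
      set c : Fin d → ℝ := fun j => F d u (w j) with hc
      set ε : Fin d → ℝ := fun j => if 0 ≤ c j then 1 else -1 with hε
      set lam0 : Fin d → ℝ := fun j => if 0 ≤ c j then 0 else 1 with hlam0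
      set t : Fin d → ℝ := fun j => if 0 ≤ c j then xt j else 1 - xt j with htdef
      set w' : Fin d → Fin d → ℝ := fun j => ε j • w j with hw'def
      have hcomb : ∀ g : Fin d → ℝ, ∑ j, g j • w' j = L (fun i => g i * ε i) := by
        intro g
        rw [hL]
        refine Finset.sum_congr rfl fun j _ => ?_
        simp only [hw'def]
        rw [smul_smul]
      have ht_mem : ∀ j, t j ∈ Set.Ioo (0:ℝ) 1 := by
        intro j
        simp only [htdef]
        split_ifs with h
        · exact ⟨hpos j, hlt j⟩
        · exact ⟨by linarith [hlt j], by linarith [hpos j]⟩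
      have hxform : x = (v₀ + L lam0) + ∑ j, t j • w' j := by
        rw [hcomb t, add_assoc, ← map_add, ← hxeq]
        have harg : (lam0 + fun i => t i * ε i) = xt := by
          funext i
          simp only [Pi.add_apply, hlam0, htdef, hε]
          split_ifs with h <;> ring
        rw [harg]
      have hFw' : ∀ j, 0 ≤ F d u (w' j) := by
        intro j
        have hcj : F d u (w j) = c j := by rw [hc]
        simp only [hw'def, LinearMap.map_smul, smul_eq_mul, hcj, hε]
        split_ifs with h
        · linarith
        · push_neg at h
          nlinarith
      refine ⟨v₀ + L lam0, w', t, ?_, ?_, ?_, ht_mem, hxform, ?_⟩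
      · rw [hPS]
        refine extremePoints_affine_image L v₀ S lam0 ?_
        rw [hSdef]
        apply cube_vertex_extreme
        intro j
        by_cases h : 0 ≤ c j
        · left
          simp only [hlam0, if_pos h]
        · right
          simp only [hlam0, if_neg h]
      · intro j
        have heq : (v₀ + L lam0) + w' j
            = v₀ + L (lam0 + ε j • (Pi.single j 1 : Fin d → ℝ)) := by
          rw [map_add, LinearEquiv.map_smul, hLsingle, add_assoc]
        rw [hPS, heq]
        refine extremePoints_affine_image L v₀ S _ ?_
        rw [hSdef]
        apply cube_vertex_extreme
        intro i
        by_cases hij : i = j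
        · rw [hij]
          simp only [Pi.add_apply, Pi.smul_apply, Pi.single_eq_same, smul_eq_mul, mul_one,
            hlam0, hε]
          split_ifs with h
          · right; ring
          · left; ring
        · by_cases h : 0 ≤ c i
          · left
            simp only [Pi.add_apply, Pi.smul_apply, Pi.single_eq_of_ne hij, smul_eq_mul,
              mul_zero, add_zero, hlam0, if_pos h]
          · right
            simp only [Pi.add_apply, Pi.smul_apply, Pi.single_eq_of_ne hij, smul_eq_mul,
              mul_zero, add_zero, hlam0, if_neg h]
      · rw [Fintype.linearIndependent_iff]
        intro g hg
        have h1 : ∑ j, (g j * ε j) • w j = 0 := by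
          rw [← hg]
          refine (Finset.sum_congr rfl fun j _ => ?_).symm
          simp only [hw'def]
          rw [smul_smul]
        have h2 := Fintype.linearIndependent_iff.1 hw _ h1
        intro i
        have h3 := h2 i
        have hεne : ε i ≠ 0 := by
          simp only [hε]
          split_ifs <;> norm_num
        exact (mul_eq_zero.1 h3).resolve_right hεne
      · rintro y ⟨mu, hmu, rfl⟩
        constructor
        · rw [hP]
          refine ⟨fun i => lam0 i + (mu i * t i) * ε i, ?_, ?_⟩
          · intro i
            have h1 := (hmu i).1
            have h2 := (hmu i).2
            have hxi1 := hpos i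
            have hxi2 := hlt i
            simp only [hlam0, htdef, hε]
            split_ifs with h
            · constructor
              · have hq : 0 ≤ mu i * xt i := mul_nonneg h1 (le_of_lt hxi1)
                nlinarith [hq]
              · have hq : 0 ≤ (1 - mu i) * xt i :=
                  mul_nonneg (by linarith) (le_of_lt hxi1)
                nlinarith [hq]
            · constructor
              · have hq : 0 ≤ (1 - mu i) * (1 - xt i) :=
                  mul_nonneg (by linarith) (by linarith)
                nlinarith [hq]
              · have hq : 0 ≤ mu i * (1 - xt i) := mul_nonneg h1 (by linarith)
                nlinarith [hq]
          · have hc2 : ∑ j, (mu j * t j) • w' j = L (fun i => (mu i * t i) * ε i) :=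
              hcomb (fun j => mu j * t j)
            have hLup : ∑ j, (lam0 j + (mu j * t j) * ε j) • w j
                = L (fun i => lam0 i + (mu i * t i) * ε i) := (hL _).symm
            rw [hc2, add_assoc, ← map_add, hLup]
            rfl
        · simp only [Set.mem_setOf_eq]
          conv_rhs => rw [hxform]
          exact halfspace_key u (v₀ + L lam0) w' t mu hFw'
            (fun j => le_of_lt (ht_mem j).1) (fun j => (hmu j).2)
  · -- second conjunct
    intro hPcube
    have hxint : ∀ j, x j ∈ Set.Ioo (0:ℝ) 1 := by
      have hcube : P = Set.univ.pi fun _ : Fin d => Set.Icc (0:ℝ) 1 := by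
        rw [hPcube]; ext y; simp [Set.mem_pi, Set.mem_Icc, Pi.le_def, forall_and]
      rw [hcube, interior_pi_set Set.finite_univ] at hx
      intro j
      have := hx j (Set.mem_univ j)
      rwa [interior_Icc] at this
    classical
    refine ⟨fun j => if 0 ≤ u j then 0 else 1,
      fun j => by by_cases h : 0 ≤ u j <;> simp [h], ?_⟩
    set a : Fin d → ℝ := fun j => if 0 ≤ u j then 0 else x j with ha
    set b : Fin d → ℝ := fun j => if 0 ≤ u j then x j else 1 with hb
    have hBsub : Set.Icc a b ⊆ P ∩ {y : Fin d → ℝ | ∑ j, u j * y j ≤ ∑ j, u j * x j} := by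
      rintro y ⟨h1, h2⟩
      constructor
      · rw [hPcube]
        intro j
        have h1j := h1 j; have h2j := h2 j
        simp only [ha, hb] at h1j h2j
        by_cases h : 0 ≤ u j
        · rw [if_pos h] at h1j h2j
          exact ⟨h1j, le_trans h2j (le_of_lt (hxint j).2)⟩
        · rw [if_neg h] at h1j h2j
          exact ⟨le_trans (le_of_lt (hxint j).1) h1j, h2j⟩
      · show ∑ j, u j * y j ≤ ∑ j, u j * x j
        refine Finset.sum_le_sum fun j _ => ?_
        have h1j := h1 j; have h2j := h2 j
        simp only [ha, hb] at h1j h2j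
        by_cases h : 0 ≤ u j
        · rw [if_pos h] at h1j h2j
          exact mul_le_mul_of_nonneg_left h2j h
        · rw [if_neg h] at h1j h2j
          have : u j < 0 := lt_of_not_ge h
          nlinarith
    have hfin : volume (P ∩ {y : Fin d → ℝ | ∑ j, u j * y j ≤ ∑ j, u j * x j}) ≠ ⊤ := by
      have hle : volume (P ∩ {y : Fin d → ℝ | ∑ j, u j * y j ≤ ∑ j, u j * x j})
          ≤ volume (Set.Icc (0 : Fin d → ℝ) 1) := by
        apply measure_mono
        intro y hy
        have := hy.1
        rw [hPcube] at this
        exact ⟨fun j => (this j).1, fun j => (this j).2⟩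
      refine ne_top_of_le_ne_top ?_ hle
      rw [Real.volume_Icc_pi]
      exact (ENNReal.prod_lt_top fun i _ => ENNReal.ofReal_lt_top).ne
    have hvol : (volume (Set.Icc a b)).toReal = ∏ j, |x j - if 0 ≤ u j then (0:ℝ) else 1| := by
      rw [Real.volume_Icc_pi, ENNReal.toReal_prod]
      refine Finset.prod_congr rfl fun j _ => ?_
      by_cases h : 0 ≤ u j
      · simp only [ha, hb, if_pos h]
        rw [ENNReal.toReal_ofReal (by linarith [(hxint j).1] : (0:ℝ) ≤ x j - 0)]
        rw [abs_of_nonneg (by linarith [(hxint j).1] : (0:ℝ) ≤ x j - 0)]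
      · simp only [ha, hb, if_neg h]
        rw [ENNReal.toReal_ofReal (by linarith [(hxint j).2] : (0:ℝ) ≤ 1 - x j)]
        rw [abs_of_nonpos (by linarith [(hxint j).2] : x j - 1 ≤ 0)]
        ring
    rw [← hvol]
    exact ENNReal.toReal_mono hfin (measure_mono hBsub)
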